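/- Let A = (a_i, α_i)_{i=1}^{n_A} and B = (b_j, β_j)_{j=1}^{n_B} be weighted point sets in ℝ^d with Σ_i α_i = Σ_j β_j = W > 0. Let p_1, …, p_N ∈ ℝ^d and let each a_i be assigned to a location p_{σ(i)} with ‖a_i − p_{σ(i)}‖ ≤ r and each b_j to a location p_{τ(j)} with ‖b_j − p_{τ(j)}‖ ≤ r, for some r ≥ 0. Set n_l = Σ_{i : σ(i) = l} α_i and m_l = Σ_{j : τ(j) = l} β_j for each location l. Let A' be the weighted point set consisting of the locations p_l with n_l > m_l, each with weight n_l − m_l, and B' the weighted point set consisting of the locations p_l with m_l > n_l, each with weight m_l − n_l. Then |Cost(A', B') − Cost(A, B)| ≤ 2rW, where Cost denotes the unnormalized minimum transportation cost. -/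

import Mathlib

noncomputable section

open Finset

/-- A feasible flow between weighted point sets with weights `α` and `β`. -/
def IsFeasibleFlow {nA nB : ℕ} (α : Fin nA → ℝ) (β : Fin nB → ℝ)
    (f : Fin nA → Fin nB → ℝ) : Prop :=
  (∀ i j, 0 ≤ f i j) ∧ (∀ j, ∑ i, f i j = β j) ∧ (∀ i, ∑ j, f i j = α i)

/-- The unnormalized minimum transportation cost between the weighted point sets
`(a, α)` and `(b, β)`. -/
def Cost {d nA nB : ℕ} (a : Fin nA → EuclideanSpace ℝ (Fin d)) (α : Fin nA → ℝ)
    (b : Fin nB → EuclideanSpace ℝ (Fin d)) (β : Fin nB → ℝ) : ℝ :=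
  sInf {c : ℝ | ∃ f, IsFeasibleFlow α β f ∧ c = ∑ i, ∑ j, f i j * ‖a i - b j‖}

/-- Existence of a feasible flow (the product flow). -/
lemma flow_exists {nA nB : ℕ} (α : Fin nA → ℝ) (β : Fin nB → ℝ)
    (hα : ∀ i, 0 ≤ α i) (hβ : ∀ j, 0 ≤ β j) (hs : ∑ i, α i = ∑ j, β j) :
    ∃ f, IsFeasibleFlow α β f := by
  by_cases h0 : ∑ i, α i = 0
  · refine ⟨fun _ _ => 0, fun _ _ => le_refl _, fun j => ?_, fun i => ?_⟩
    · have : β j = 0 := by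
        have := (Finset.sum_eq_zero_iff_of_nonneg (fun j _ => hβ j)).mp (hs ▸ h0)
        exact this j (mem_univ j)
      simp [this]
    · have : α i = 0 :=
        (Finset.sum_eq_zero_iff_of_nonneg (fun i _ => hα i)).mp h0 i (mem_univ i)
      simp [this]
  · refine ⟨fun i j => α i * β j / (∑ i, α i), fun i j => ?_, fun j => ?_, fun i => ?_⟩
    · exact div_nonneg (mul_nonneg (hα i) (hβ j)) (Finset.sum_nonneg fun i _ => hα i)
    · rw [← Finset.sum_div, ← Finset.sum_mul, mul_comm, mul_div_assoc, div_self h0, mul_one]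
    · simp_rw [mul_div_assoc, ← Finset.mul_sum, ← Finset.sum_div, ← hs, div_self h0, mul_one]

lemma shortcut_step {N : ℕ} (d : Fin N → Fin N → ℝ)
    (hdnn : ∀ l l', 0 ≤ d l l')
    (hdtri : ∀ l l' l'', d l l'' ≤ d l l' + d l' l'')
    (n m : Fin N → ℝ) (g : Fin N → Fin N → ℝ) (hg : IsFeasibleFlow n m g)
    (l0 : Fin N) (hle : n l0 ≤ m l0) :
    ∃ g1, IsFeasibleFlow (Function.update n l0 0) (Function.update m l0 (m l0 - n l0)) g1 ∧
      ∑ l, ∑ l', g1 l l' * d l l' ≤ ∑ l, ∑ l', g l l' * d l l' := by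
  obtain ⟨hg0, hgc, hgr⟩ := hg
  set E := Finset.univ.erase l0 with hE
  set D := g l0 l0 with hD
  set mt := m l0 - D with hmtdef
  set nt := n l0 - D with hntdef
  have hDn : D ≤ n l0 := by
    rw [← hgr l0]
    exact Finset.single_le_sum (fun l' _ => hg0 l0 l') (mem_univ l0)
  have hnt0 : 0 ≤ nt := by rw [hntdef]; linarith
  have hntmt : nt ≤ mt := by rw [hntdef, hmtdef]; linarith
  have hmt0 : 0 ≤ mt := le_trans hnt0 hntmt
  have hrowE : ∑ l' ∈ E, g l0 l' = nt := by
    have := Finset.sum_erase_add univ (fun l' => g l0 l') (mem_univ l0)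
    rw [hgr l0] at this
    rw [hntdef, ← this, hE]; ring
  have hcolE : ∑ l ∈ E, g l l0 = mt := by
    have := Finset.sum_erase_add univ (fun l => g l l0) (mem_univ l0)
    rw [hgc l0] at this
    rw [hmtdef, ← this, hE]; ring
  set g1 : Fin N → Fin N → ℝ := fun l l' =>
    if l = l0 then 0 else if l' = l0 then g l l0 * ((mt - nt) / mt)
    else g l l' + g l l0 * (g l0 l' / mt) with hg1
  have hA : ∀ l', g1 l0 l' = 0 := fun l' => if_pos rfl
  have hB : ∀ l, l ≠ l0 → g1 l l0 = g l l0 * ((mt - nt) / mt) := by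
    intro l h; simp only [hg1]; simp [h]
  have hC : ∀ l l', l ≠ l0 → l' ≠ l0 → g1 l l' = g l l' + g l l0 * (g l0 l' / mt) := by
    intro l l' h h'; simp only [hg1]; simp [h, h']
  -- marginal computations, valid in both cases below given auxiliary facts
  have hfrac : mt ≠ 0 → nt / mt + (mt - nt) / mt = 1 := by
    intro h; field_simp; ring
  refine ⟨g1, ⟨?_, ?_, ?_⟩, ?_⟩
  · -- nonnegativity
    intro l l'
    by_cases h : l = l0
    · rw [h, hA]
    · by_cases h' : l' = l0
      · rw [h', hB l h]
        exact mul_nonneg (hg0 _ _) (div_nonneg (by linarith) hmt0)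
      · rw [hC l l' h h']
        exact add_nonneg (hg0 _ _) (mul_nonneg (hg0 _ _) (div_nonneg (hg0 _ _) hmt0))
  · -- column sums
    intro l'
    by_cases h' : l' = l0
    · rw [h', Function.update_self,
          ← Finset.sum_erase_add univ (fun l => g1 l l0) (mem_univ l0), hA, add_zero]
      have e1 : ∑ l ∈ E, g1 l l0 = ∑ l ∈ E, g l l0 * ((mt - nt) / mt) :=
        Finset.sum_congr rfl fun l hl => hB l (Finset.mem_erase.mp hl).1
      rw [e1, ← Finset.sum_mul, hcolE]
      by_cases hc : mt = 0
      · have h1 : nt = 0 := le_antisymm (hc ▸ hntmt) hnt0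
        have e2 : m l0 - D = 0 := by rw [← hmtdef]; exact hc
        have e3 : n l0 - D = 0 := by rw [← hntdef]; exact h1
        rw [hc]; simp; linarith
      · rw [mul_div_assoc'] at *
        rw [mul_comm, mul_div_assoc, div_self hc, mul_one, hmtdef, hntdef]; ring
    · rw [Function.update_of_ne h', ← hgc l',
          ← Finset.sum_erase_add univ (fun l => g1 l l') (mem_univ l0), hA, add_zero,
          ← Finset.sum_erase_add univ (fun l => g l l') (mem_univ l0)]
      have e1 : ∑ l ∈ E, g1 l l' = ∑ l ∈ E, (g l l' + g l l0 * (g l0 l' / mt)) :=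
        Finset.sum_congr rfl fun l hl => hC l l' (Finset.mem_erase.mp hl).1 h'
      rw [e1, Finset.sum_add_distrib, ← Finset.sum_mul, hcolE]
      by_cases hc : mt = 0
      · have h1 : g l0 l' = 0 := by
          have hz := (Finset.sum_eq_zero_iff_of_nonneg (fun x _ => hg0 l0 x)).mp
            (hrowE.trans (le_antisymm (hc ▸ hntmt) hnt0))
          exact hz l' (Finset.mem_erase.mpr ⟨h', mem_univ l'⟩)
        rw [h1, hc]; simp
        have := Finset.sum_erase_add univ (fun x => g x l') (mem_univ l0)
        rw [hE]; linarith
      · rw [mul_div_cancel₀ _ hc]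
  · -- row sums
    intro l
    by_cases h : l = l0
    · rw [h, Function.update_self]
      exact Finset.sum_eq_zero fun l' _ => hA l'
    · rw [Function.update_of_ne h, ← hgr l,
          ← Finset.sum_erase_add univ (fun l' => g1 l l') (mem_univ l0), hB l h,
          ← Finset.sum_erase_add univ (fun l' => g l l') (mem_univ l0)]
      have e1 : ∑ l' ∈ E, g1 l l' = ∑ l' ∈ E, (g l l' + g l l0 * (g l0 l' / mt)) :=
        Finset.sum_congr rfl fun l' hl' => hC l l' h (Finset.mem_erase.mp hl').1
      rw [e1, Finset.sum_add_distrib]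
      simp_rw [← mul_div_assoc, ← Finset.sum_div, ← Finset.mul_sum, hrowE]
      by_cases hc : mt = 0
      · have h1 : g l l0 = 0 := by
          have hz := (Finset.sum_eq_zero_iff_of_nonneg (fun x _ => hg0 x l0)).mp
            (hcolE.trans hc)
          exact hz l (Finset.mem_erase.mpr ⟨h, mem_univ l⟩)
        rw [h1]; simp
        have := Finset.sum_erase_add univ (fun x => g l x) (mem_univ l0)
        rw [hE]; linarith
      · have h1 : g l l0 * nt / mt + g l l0 * (mt - nt) / mt = g l l0 := by
          field_simp; ring
        simp only [← hE]; linarith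
  · -- cost comparison
    rw [← Finset.sum_erase_add univ (fun l => ∑ l', g1 l l' * d l l') (mem_univ l0),
        ← Finset.sum_erase_add univ (fun l => ∑ l', g l l' * d l l') (mem_univ l0)]
    have hrow0 : ∑ l', g1 l0 l' * d l0 l' = 0 :=
      Finset.sum_eq_zero fun l' _ => by rw [hA, zero_mul]
    rw [hrow0, add_zero]
    have hRHSrow : ∑ l' ∈ E, g l0 l' * d l0 l' ≤ ∑ l', g l0 l' * d l0 l' := by
      rw [← Finset.sum_erase_add univ (fun l' => g l0 l' * d l0 l') (mem_univ l0)]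
      have : 0 ≤ g l0 l0 * d l0 l0 := mul_nonneg (hg0 _ _) (hdnn _ _)
      rw [← hE]; linarith
    have hsplit : ∀ l ∈ E, ∑ l', g1 l l' * d l l' =
        (∑ l' ∈ E, (g l l' + g l l0 * (g l0 l' / mt)) * d l l') +
        g l l0 * ((mt - nt) / mt) * d l l0 := by
      intro l hl
      have hln : l ≠ l0 := (Finset.mem_erase.mp hl).1
      rw [← Finset.sum_erase_add univ (fun l' => g1 l l' * d l l') (mem_univ l0), hB l hln]
      refine congrArg (· + _) (Finset.sum_congr rfl fun l' hl' => ?_)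
      rw [hC l l' hln (Finset.mem_erase.mp hl').1]
    have hsplitg : ∀ l ∈ E, ∑ l', g l l' * d l l' =
        (∑ l' ∈ E, g l l' * d l l') + g l l0 * d l l0 := by
      intro l _
      rw [← Finset.sum_erase_add univ (fun l' => g l l' * d l l') (mem_univ l0)]
    rw [Finset.sum_congr rfl hsplit, Finset.sum_congr rfl hsplitg,
        Finset.sum_add_distrib, Finset.sum_add_distrib]
    have hexp : ∀ l ∈ E, ∑ l' ∈ E, (g l l' + g l l0 * (g l0 l' / mt)) * d l l' =
        (∑ l' ∈ E, g l l' * d l l') + ∑ l' ∈ E, g l l0 * (g l0 l' / mt) * d l l' := by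
      intro l _
      rw [← Finset.sum_add_distrib]
      exact Finset.sum_congr rfl fun l' _ => by ring
    rw [Finset.sum_congr rfl hexp, Finset.sum_add_distrib]
    have hmain : (∑ l ∈ E, ∑ l' ∈ E, g l l0 * (g l0 l' / mt) * d l l') +
        ∑ l ∈ E, g l l0 * ((mt - nt) / mt) * d l l0 ≤
        (∑ l ∈ E, g l l0 * d l l0) + ∑ l' ∈ E, g l0 l' * d l0 l' := by
      by_cases hc : mt = 0
      · have hz := (Finset.sum_eq_zero_iff_of_nonneg (fun x _ => hg0 x l0)).mp
          (hcolE.trans hc)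
        have e0 : ∀ l ∈ E, g l l0 = 0 := hz
        have eL : (∑ l ∈ E, ∑ l' ∈ E, g l l0 * (g l0 l' / mt) * d l l') = 0 :=
          Finset.sum_eq_zero fun l hl =>
            Finset.sum_eq_zero fun l' _ => by rw [e0 l hl]; ring
        have eR : (∑ l ∈ E, g l l0 * ((mt - nt) / mt) * d l l0) = 0 :=
          Finset.sum_eq_zero fun l hl => by rw [e0 l hl]; ring
        rw [eL, eR, add_zero]
        exact add_nonneg (Finset.sum_nonneg fun l _ => mul_nonneg (hg0 _ _) (hdnn _ _))
          (Finset.sum_nonneg fun l' _ => mul_nonneg (hg0 _ _) (hdnn _ _))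
      · have h1 : ∑ l ∈ E, ∑ l' ∈ E, g l l0 * (g l0 l' / mt) * d l l' ≤
            (∑ l ∈ E, ∑ l' ∈ E, g l l0 * (g l0 l' / mt) * d l l0) +
            ∑ l ∈ E, ∑ l' ∈ E, g l l0 * (g l0 l' / mt) * d l0 l' := by
          rw [← Finset.sum_add_distrib]
          refine Finset.sum_le_sum fun l _ => ?_
          rw [← Finset.sum_add_distrib]
          refine Finset.sum_le_sum fun l' _ => ?_
          have hnn : 0 ≤ g l l0 * (g l0 l' / mt) :=
            mul_nonneg (hg0 _ _) (div_nonneg (hg0 _ _) hmt0)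
          calc g l l0 * (g l0 l' / mt) * d l l'
              ≤ g l l0 * (g l0 l' / mt) * (d l l0 + d l0 l') :=
                mul_le_mul_of_nonneg_left (hdtri l l0 l') hnn
            _ = _ := by ring
        have h2 : ∑ l ∈ E, ∑ l' ∈ E, g l l0 * (g l0 l' / mt) * d l l0 =
            ∑ l ∈ E, g l l0 * d l l0 * (nt / mt) := by
          refine Finset.sum_congr rfl fun l _ => ?_
          simp_rw [show ∀ l', g l l0 * (g l0 l' / mt) * d l l0
              = g l l0 * d l l0 / mt * g l0 l' from fun l' => by ring]
          rw [← Finset.mul_sum, hrowE]; ring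
        have h3 : ∑ l ∈ E, ∑ l' ∈ E, g l l0 * (g l0 l' / mt) * d l0 l' =
            ∑ l' ∈ E, g l0 l' * d l0 l' := by
          rw [Finset.sum_comm]
          refine Finset.sum_congr rfl fun l' _ => ?_
          simp_rw [show ∀ l, g l l0 * (g l0 l' / mt) * d l0 l'
              = g l0 l' * d l0 l' / mt * g l l0 from fun l => by ring]
          rw [← Finset.mul_sum, hcolE, div_mul_cancel₀ _ hc]
        have h4 : (∑ l ∈ E, g l l0 * d l l0 * (nt / mt)) +
            ∑ l ∈ E, g l l0 * ((mt - nt) / mt) * d l l0 = ∑ l ∈ E, g l l0 * d l l0 := by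
          rw [← Finset.sum_add_distrib]
          refine Finset.sum_congr rfl fun l _ => ?_
          field_simp
          ring
        linarith
    linarith

lemma transpose_feas {N : ℕ} {n m : Fin N → ℝ} {g : Fin N → Fin N → ℝ}
    (hg : IsFeasibleFlow n m g) : IsFeasibleFlow m n (fun l l' => g l' l) :=
  ⟨fun l l' => hg.1 l' l, fun l' => hg.2.2 l', fun l => hg.2.1 l⟩

lemma transpose_cost {N : ℕ} (d : Fin N → Fin N → ℝ) (hdsym : ∀ l l', d l l' = d l' l)
    (g : Fin N → Fin N → ℝ) :
    ∑ l, ∑ l', g l' l * d l l' = ∑ l, ∑ l', g l l' * d l l' := by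
  rw [Finset.sum_comm]
  exact Finset.sum_congr rfl fun l _ => Finset.sum_congr rfl fun l' _ => by rw [hdsym]

lemma cancel_common {N : ℕ} (d : Fin N → Fin N → ℝ)
    (hdnn : ∀ l l', 0 ≤ d l l') (hdsym : ∀ l l', d l l' = d l' l)
    (hdtri : ∀ l l' l'', d l l'' ≤ d l l' + d l' l'') :
    ∀ (k : ℕ) (n m : Fin N → ℝ) (g : Fin N → Fin N → ℝ),
      (Finset.univ.filter (fun l => 0 < min (n l) (m l))).card ≤ k →
      IsFeasibleFlow n m g →
      ∃ g', IsFeasibleFlow (fun l => n l - min (n l) (m l))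
              (fun l => m l - min (n l) (m l)) g' ∧
        ∑ l, ∑ l', g' l l' * d l l' ≤ ∑ l, ∑ l', g l l' * d l l' := by
  intro k
  induction k with
  | zero =>
    intro n m g hcard hg
    have hzero : ∀ l, min (n l) (m l) = 0 := by
      intro l
      have h1 : ¬ (0 < min (n l) (m l)) := by
        intro h
        have : l ∈ Finset.univ.filter (fun l => 0 < min (n l) (m l)) := by
          simp only [mem_filter, mem_univ, true_and]; exact h
        have := Finset.card_pos.mpr ⟨l, this⟩
        omega
      have h2 : 0 ≤ n l := by rw [← hg.2.2 l]; exact Finset.sum_nonneg fun _ _ => hg.1 _ _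
      have h3 : 0 ≤ m l := by rw [← hg.2.1 l]; exact Finset.sum_nonneg fun _ _ => hg.1 _ _
      have := le_min h2 h3
      push_neg at h1
      linarith
    refine ⟨g, ?_, le_refl _⟩
    simpa [hzero] using hg
  | succ k ih =>
    intro n m g hcard hg
    by_cases hex : ∃ l0, 0 < min (n l0) (m l0)
    · obtain ⟨l0, hl0⟩ := hex
      have hmem : l0 ∈ Finset.univ.filter (fun l => 0 < min (n l) (m l)) := by
        simp only [mem_filter, mem_univ, true_and]; exact hl0
      by_cases hle : n l0 ≤ m l0
      · obtain ⟨g1, hg1, hcost1⟩ := shortcut_step d hdnn hdtri n m g hg l0 hle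
        set n1 := Function.update n l0 0 with hn1
        set m1 := Function.update m l0 (m l0 - n l0) with hm1
        have hcard1 : (Finset.univ.filter (fun l => 0 < min (n1 l) (m1 l))).card ≤ k := by
          have hsub : Finset.univ.filter (fun l => 0 < min (n1 l) (m1 l)) ⊆
              (Finset.univ.filter (fun l => 0 < min (n l) (m l))).erase l0 := by
            intro l hl
            simp only [mem_filter, mem_univ, true_and] at hl
            have hne : l ≠ l0 := by
              intro h
              rw [h, hn1, hm1, Function.update_self, Function.update_self, lt_min_iff] at hl
              exact absurd hl.1 (lt_irrefl 0)
            refine Finset.mem_erase.mpr ⟨hne, ?_⟩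
            simp only [mem_filter, mem_univ, true_and]
            rwa [hn1, hm1, Function.update_of_ne hne, Function.update_of_ne hne] at hl
          calc _ ≤ ((Finset.univ.filter (fun l => 0 < min (n l) (m l))).erase l0).card :=
                Finset.card_le_card hsub
            _ = (Finset.univ.filter (fun l => 0 < min (n l) (m l))).card - 1 :=
                Finset.card_erase_of_mem hmem
            _ ≤ k := by omega
        obtain ⟨g', hg', hcost'⟩ := ih n1 m1 g1 hcard1 hg1
        have hmarg1 : (fun l => n1 l - min (n1 l) (m1 l)) = fun l => n l - min (n l) (m l) := by
          funext l
          by_cases h : l = l0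
          · rw [h, hn1, hm1]
            simp only [Function.update_self]
            have h1 : min (n l0) (m l0) = n l0 := min_eq_left hle
            have h2 : min (0:ℝ) (m l0 - n l0) = 0 := min_eq_left (by linarith)
            rw [h1, h2]; ring
          · rw [hn1, hm1, Function.update_of_ne h, Function.update_of_ne h]
        have hmarg2 : (fun l => m1 l - min (n1 l) (m1 l)) = fun l => m l - min (n l) (m l) := by
          funext l
          by_cases h : l = l0
          · rw [h, hn1, hm1]
            simp only [Function.update_self]
            have h1 : min (n l0) (m l0) = n l0 := min_eq_left hle
            have h2 : min (0:ℝ) (m l0 - n l0) = 0 := min_eq_left (by linarith)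
            rw [h1, h2]; ring
          · rw [hn1, hm1, Function.update_of_ne h, Function.update_of_ne h]
        rw [hmarg1, hmarg2] at hg'
        exact ⟨g', hg', hcost'.trans hcost1⟩
      · -- transpose case
        push_neg at hle
        have hle' : m l0 ≤ n l0 := le_of_lt hle
        have hgT : IsFeasibleFlow m n (fun l l' => g l' l) := transpose_feas hg
        obtain ⟨g1, hg1, hcost1⟩ := shortcut_step d hdnn hdtri m n _ hgT l0 hle'
        set m1 := Function.update m l0 0 with hm1
        set n1 := Function.update n l0 (n l0 - m l0) with hn1
        have hcard1 : (Finset.univ.filter (fun l => 0 < min (m1 l) (n1 l))).card ≤ k := by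
          have hsub : Finset.univ.filter (fun l => 0 < min (m1 l) (n1 l)) ⊆
              (Finset.univ.filter (fun l => 0 < min (n l) (m l))).erase l0 := by
            intro l hl
            simp only [mem_filter, mem_univ, true_and] at hl
            have hne : l ≠ l0 := by
              intro h
              rw [h, hn1, hm1, Function.update_self, Function.update_self, lt_min_iff] at hl
              exact absurd hl.1 (lt_irrefl 0)
            refine Finset.mem_erase.mpr ⟨hne, ?_⟩
            simp only [mem_filter, mem_univ, true_and]
            rw [hn1, hm1, Function.update_of_ne hne, Function.update_of_ne hne] at hl
            rwa [min_comm] at hl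
          calc _ ≤ ((Finset.univ.filter (fun l => 0 < min (n l) (m l))).erase l0).card :=
                Finset.card_le_card hsub
            _ = (Finset.univ.filter (fun l => 0 < min (n l) (m l))).card - 1 :=
                Finset.card_erase_of_mem hmem
            _ ≤ k := by omega
        obtain ⟨g'', hg'', hcost''⟩ := ih m1 n1 g1 hcard1 hg1
        have hmarg1 : (fun l => m1 l - min (m1 l) (n1 l)) = fun l => m l - min (n l) (m l) := by
          funext l
          by_cases h : l = l0
          · rw [h, hn1, hm1]
            simp only [Function.update_self]
            have h1 : min (n l0) (m l0) = m l0 := min_eq_right hle'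
            have h2 : min (0:ℝ) (n l0 - m l0) = 0 := min_eq_left (by linarith)
            rw [h1, h2]; ring
          · rw [hn1, hm1, Function.update_of_ne h, Function.update_of_ne h, min_comm]
        have hmarg2 : (fun l => n1 l - min (m1 l) (n1 l)) = fun l => n l - min (n l) (m l) := by
          funext l
          by_cases h : l = l0
          · rw [h, hn1, hm1]
            simp only [Function.update_self]
            have h1 : min (n l0) (m l0) = m l0 := min_eq_right hle'
            have h2 : min (0:ℝ) (n l0 - m l0) = 0 := min_eq_left (by linarith)
            rw [h1, h2]; ring
          · rw [hn1, hm1, Function.update_of_ne h, Function.update_of_ne h, min_comm]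
        rw [hmarg1, hmarg2] at hg''
        refine ⟨fun l l' => g'' l' l, transpose_feas hg'', ?_⟩
        rw [transpose_cost d hdsym g'']
        calc ∑ l, ∑ l', g'' l l' * d l l' ≤ ∑ l, ∑ l', g1 l l' * d l l' := hcost''
          _ ≤ ∑ l, ∑ l', g l' l * d l l' := hcost1
          _ = ∑ l, ∑ l', g l l' * d l l' := transpose_cost d hdsym g
    · -- no location with positive common mass: min = 0 everywhere
      push_neg at hex
      have hzero : ∀ l, min (n l) (m l) = 0 := by
        intro l
        have h2 : 0 ≤ n l := by rw [← hg.2.2 l]; exact Finset.sum_nonneg fun _ _ => hg.1 _ _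
        have h3 : 0 ≤ m l := by rw [← hg.2.1 l]; exact Finset.sum_nonneg fun _ _ => hg.1 _ _
        have := le_min h2 h3
        have := hex l
        linarith
      refine ⟨g, ?_, le_refl _⟩
      simpa [hzero] using hg
/-- Regrouping a double sum along fibers of `σ` and `τ`. -/
lemma sum_push {nA nB N : ℕ} (σ : Fin nA → Fin N) (τ : Fin nB → Fin N)
    (F : Fin nA → Fin nB → ℝ) (h : Fin N → Fin N → ℝ) :
    ∑ l, ∑ l', (∑ i ∈ univ.filter (fun i => σ i = l),
        ∑ j ∈ univ.filter (fun j => τ j = l'), F i j) * h l l'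
      = ∑ i, ∑ j, F i j * h (σ i) (τ j) := by
  have step1 : ∀ l, ∑ l', (∑ i ∈ univ.filter (fun i => σ i = l),
      ∑ j ∈ univ.filter (fun j => τ j = l'), F i j) * h l l'
      = ∑ i ∈ univ.filter (fun i => σ i = l), ∑ j, F i j * h (σ i) (τ j) := by
    intro l
    have e1 : ∀ l', (∑ i ∈ univ.filter (fun i => σ i = l),
        ∑ j ∈ univ.filter (fun j => τ j = l'), F i j) * h l l'
        = ∑ i ∈ univ.filter (fun i => σ i = l),
            ∑ j ∈ univ.filter (fun j => τ j = l'), F i j * h (σ i) (τ j) := by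
      intro l'
      rw [Finset.sum_mul]
      refine Finset.sum_congr rfl fun i hi => ?_
      rw [Finset.sum_mul]
      refine Finset.sum_congr rfl fun j hj => ?_
      rw [(mem_filter.mp hi).2, (mem_filter.mp hj).2]
    rw [Finset.sum_congr rfl fun l' _ => e1 l', Finset.sum_comm]
    exact Finset.sum_congr rfl fun i _ =>
      Finset.sum_fiberwise univ τ (fun j => F i j * h (σ i) (τ j))
  rw [Finset.sum_congr rfl fun l _ => step1 l]
  exact Finset.sum_fiberwise univ σ (fun i => ∑ j, F i j * h (σ i) (τ j))

section Directions

variable {dd nA nB N : ℕ}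
  (a : Fin nA → EuclideanSpace ℝ (Fin dd)) (α : Fin nA → ℝ)
  (b : Fin nB → EuclideanSpace ℝ (Fin dd)) (β : Fin nB → ℝ)
  (p : Fin N → EuclideanSpace ℝ (Fin dd))
  (σ : Fin nA → Fin N) (τ : Fin nB → Fin N)
  (r : ℝ) (n m : Fin N → ℝ)

/-- Pushing a flow forward to the locations. -/
lemma dirA (hα : ∀ i, 0 ≤ α i) (hβ : ∀ j, 0 ≤ β j)
    (hσ : ∀ i, ‖a i - p (σ i)‖ ≤ r) (hτ : ∀ j, ‖b j - p (τ j)‖ ≤ r)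
    (hn : ∀ l, n l = ∑ i ∈ Finset.univ.filter (fun i => σ i = l), α i)
    (hm : ∀ l, m l = ∑ j ∈ Finset.univ.filter (fun j => τ j = l), β j)
    (f : Fin nA → Fin nB → ℝ) (hf : IsFeasibleFlow α β f) :
    ∃ g, IsFeasibleFlow n m g ∧
      ∑ l, ∑ l', g l l' * ‖p l - p l'‖ ≤
        (∑ i, ∑ j, f i j * ‖a i - b j‖) + 2 * r * (∑ i, α i) := by
  obtain ⟨hf0, hfc, hfr⟩ := hf
  set g : Fin N → Fin N → ℝ := fun l l' =>
    ∑ i ∈ univ.filter (fun i => σ i = l), ∑ j ∈ univ.filter (fun j => τ j = l'), f i j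
    with hgdef
  refine ⟨g, ⟨?_, ?_, ?_⟩, ?_⟩
  · intro l l'
    exact Finset.sum_nonneg fun i _ => Finset.sum_nonneg fun j _ => hf0 i j
  · intro l'
    have e1 : ∀ l, g l l' = ∑ j ∈ univ.filter (fun j => τ j = l'),
        ∑ i ∈ univ.filter (fun i => σ i = l), f i j := fun l => Finset.sum_comm
    rw [Finset.sum_congr rfl fun l (_ : l ∈ univ) => e1 l, Finset.sum_comm, hm l']
    refine Finset.sum_congr rfl fun j _ => ?_
    exact (Finset.sum_fiberwise univ σ (fun i => f i j)).trans (hfc j)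
  · intro l
    rw [Finset.sum_comm, hn l]
    refine Finset.sum_congr rfl fun i _ => ?_
    exact (Finset.sum_fiberwise univ τ (fun j => f i j)).trans (hfr i)
  · have := sum_push σ τ f (fun l l' => ‖p l - p l'‖)
    rw [this]
    have hbound : ∀ i j, f i j * ‖p (σ i) - p (τ j)‖ ≤ f i j * (‖a i - b j‖ + 2 * r) := by
      intro i j
      refine mul_le_mul_of_nonneg_left ?_ (hf0 i j)
      calc ‖p (σ i) - p (τ j)‖ ≤ ‖p (σ i) - a i‖ + ‖a i - b j‖ + ‖b j - p (τ j)‖ := by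
            have h1 := norm_sub_le_norm_sub_add_norm_sub (p (σ i)) (a i) (p (τ j))
            have h2 := norm_sub_le_norm_sub_add_norm_sub (a i) (b j) (p (τ j))
            linarith
        _ ≤ ‖a i - b j‖ + 2 * r := by
            have h1 : ‖p (σ i) - a i‖ ≤ r := by rw [norm_sub_rev]; exact hσ i
            linarith [hτ j]
    calc ∑ i, ∑ j, f i j * ‖p (σ i) - p (τ j)‖
        ≤ ∑ i, ∑ j, f i j * (‖a i - b j‖ + 2 * r) :=
          Finset.sum_le_sum fun i _ => Finset.sum_le_sum fun j _ => hbound i j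
      _ = (∑ i, ∑ j, f i j * ‖a i - b j‖) + 2 * r * (∑ i, α i) := by
          simp_rw [mul_add, Finset.sum_add_distrib]
          congr 1
          have e2 : ∀ i, ∑ j, f i j * (2 * r) = α i * (2 * r) := fun i => by
            rw [← Finset.sum_mul, hfr i]
          rw [Finset.sum_congr rfl fun i (_ : i ∈ univ) => e2 i, ← Finset.sum_mul]
          ring
      _ = _ := by rfl


/-- Splitting a flow on locations into a flow on the original points. -/
lemma dirB (hα : ∀ i, 0 ≤ α i) (hβ : ∀ j, 0 ≤ β j)
    (hσ : ∀ i, ‖a i - p (σ i)‖ ≤ r) (hτ : ∀ j, ‖b j - p (τ j)‖ ≤ r)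
    (hn : ∀ l, n l = ∑ i ∈ Finset.univ.filter (fun i => σ i = l), α i)
    (hm : ∀ l, m l = ∑ j ∈ Finset.univ.filter (fun j => τ j = l), β j)
    (g : Fin N → Fin N → ℝ) (hg : IsFeasibleFlow n m g) :
    ∃ f, IsFeasibleFlow α β f ∧
      ∑ i, ∑ j, f i j * ‖a i - b j‖ ≤
        (∑ l, ∑ l', g l l' * ‖p l - p l'‖) + 2 * r * (∑ i, α i) := by
  obtain ⟨hg0, hgc, hgr⟩ := hg
  have hαn : ∀ i, α i ≤ n (σ i) := by
    intro i
    rw [hn (σ i)]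
    exact Finset.single_le_sum (fun i _ => hα i)
      (mem_filter.mpr ⟨mem_univ i, rfl⟩)
  have hβm : ∀ j, β j ≤ m (τ j) := by
    intro j
    rw [hm (τ j)]
    exact Finset.single_le_sum (fun j _ => hβ j)
      (mem_filter.mpr ⟨mem_univ j, rfl⟩)
  have hn0 : ∀ l, 0 ≤ n l := fun l =>
    (hn l) ▸ Finset.sum_nonneg fun i _ => hα i
  have hm0 : ∀ l, 0 ≤ m l := fun l =>
    (hm l) ▸ Finset.sum_nonneg fun j _ => hβ j
  have hgn : ∀ l l', n l = 0 → g l l' = 0 := by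
    intro l l' hz
    have := (Finset.sum_eq_zero_iff_of_nonneg (fun x _ => hg0 l x)).mp ((hgr l).trans hz)
    exact this l' (mem_univ l')
  have hgm : ∀ l l', m l' = 0 → g l l' = 0 := by
    intro l l' hz
    have := (Finset.sum_eq_zero_iff_of_nonneg (fun x _ => hg0 x l')).mp ((hgc l').trans hz)
    exact this l (mem_univ l)
  set f : Fin nA → Fin nB → ℝ := fun i j =>
    g (σ i) (τ j) * (α i / n (σ i)) * (β j / m (τ j)) with hfdef
  have eA : ∀ (i : Fin nA) (l' : Fin N), ∑ j ∈ univ.filter (fun j => τ j = l'), f i j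
      = g (σ i) l' * (α i / n (σ i)) := by
    intro i l'
    have e0 : ∀ j ∈ univ.filter (fun j => τ j = l'),
        f i j = (g (σ i) l' * (α i / n (σ i)) / m l') * β j := by
      intro j hj
      simp only [hfdef]
      rw [(mem_filter.mp hj).2]
      ring
    rw [Finset.sum_congr rfl e0, ← Finset.mul_sum, ← hm l']
    by_cases hz : m l' = 0
    · rw [hgm (σ i) l' hz]
      ring
    · exact div_mul_cancel₀ _ hz
  have eB : ∀ (j : Fin nB) (l : Fin N), ∑ i ∈ univ.filter (fun i => σ i = l), f i j
      = g l (τ j) * (β j / m (τ j)) := by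
    intro j l
    have e0 : ∀ i ∈ univ.filter (fun i => σ i = l),
        f i j = (g l (τ j) * (β j / m (τ j)) / n l) * α i := by
      intro i hi
      simp only [hfdef]
      rw [(mem_filter.mp hi).2]
      ring
    rw [Finset.sum_congr rfl e0, ← Finset.mul_sum, ← hn l]
    by_cases hz : n l = 0
    · rw [hgn l (τ j) hz]
      ring
    · exact div_mul_cancel₀ _ hz
  refine ⟨f, ⟨?_, ?_, ?_⟩, ?_⟩
  · intro i j
    exact mul_nonneg (mul_nonneg (hg0 _ _) (div_nonneg (hα i) (hn0 _)))
      (div_nonneg (hβ j) (hm0 _))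
  · intro j
    rw [← Finset.sum_fiberwise univ σ (fun i => f i j),
        Finset.sum_congr rfl fun l (_ : l ∈ univ) => eB j l, ← Finset.sum_mul, hgc (τ j)]
    by_cases hz : m (τ j) = 0
    · have : β j = 0 := le_antisymm (le_of_le_of_eq (hβm j) hz) (hβ j)
      rw [hz, this]; ring
    · field_simp
  · intro i
    rw [← Finset.sum_fiberwise univ τ (fun j => f i j),
        Finset.sum_congr rfl fun l' (_ : l' ∈ univ) => eA i l', ← Finset.sum_mul, hgr (σ i)]
    by_cases hz : n (σ i) = 0
    · have : α i = 0 := le_antisymm (le_of_le_of_eq (hαn i) hz) (hα i)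
      rw [hz, this]; ring
    · field_simp
  · -- cost bound
    have hfib : ∀ l l', (∑ i ∈ univ.filter (fun i => σ i = l),
        ∑ j ∈ univ.filter (fun j => τ j = l'), f i j) = g l l' := by
      intro l l'
      have e0 : ∀ i ∈ univ.filter (fun i => σ i = l),
          ∑ j ∈ univ.filter (fun j => τ j = l'), f i j = (g l l' / n l) * α i := by
        intro i hi
        rw [eA i l', (mem_filter.mp hi).2]
        ring
      rw [Finset.sum_congr rfl e0, ← Finset.mul_sum, ← hn l]
      by_cases hz : n l = 0
      · rw [hgn l l' hz]; ring
      · exact div_mul_cancel₀ _ hz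
    have hf0 : ∀ i j, 0 ≤ f i j := fun i j =>
      mul_nonneg (mul_nonneg (hg0 _ _) (div_nonneg (hα i) (hn0 _)))
        (div_nonneg (hβ j) (hm0 _))
    have hbound : ∀ i j, f i j * ‖a i - b j‖ ≤ f i j * (‖p (σ i) - p (τ j)‖ + 2 * r) := by
      intro i j
      refine mul_le_mul_of_nonneg_left ?_ (hf0 i j)
      calc ‖a i - b j‖ ≤ ‖a i - p (σ i)‖ + ‖p (σ i) - p (τ j)‖ + ‖p (τ j) - b j‖ := by
            have h1 := norm_sub_le_norm_sub_add_norm_sub (a i) (p (σ i)) (b j)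
            have h2 := norm_sub_le_norm_sub_add_norm_sub (p (σ i)) (p (τ j)) (b j)
            linarith
        _ ≤ ‖p (σ i) - p (τ j)‖ + 2 * r := by
            have h1 : ‖p (τ j) - b j‖ ≤ r := by rw [norm_sub_rev]; exact hτ j
            linarith [hσ i]
    calc ∑ i, ∑ j, f i j * ‖a i - b j‖
        ≤ ∑ i, ∑ j, f i j * (‖p (σ i) - p (τ j)‖ + 2 * r) :=
          Finset.sum_le_sum fun i _ => Finset.sum_le_sum fun j _ => hbound i j
      _ = ∑ l, ∑ l', g l l' * (‖p l - p l'‖ + 2 * r) := by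
          rw [← sum_push σ τ f (fun l l' => ‖p l - p l'‖ + 2 * r)]
          exact Finset.sum_congr rfl fun l _ => Finset.sum_congr rfl fun l' _ => by
            rw [hfib l l']
      _ = (∑ l, ∑ l', g l l' * ‖p l - p l'‖) + 2 * r * (∑ i, α i) := by
          simp_rw [mul_add, Finset.sum_add_distrib]
          congr 1
          have e2 : ∀ l, ∑ l', g l l' * (2 * r) = n l * (2 * r) := fun l => by
            rw [← Finset.sum_mul, hgr l]
          rw [Finset.sum_congr rfl fun l (_ : l ∈ univ) => e2 l, ← Finset.sum_mul]
          have : ∑ l, n l = ∑ i, α i := by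
            rw [Finset.sum_congr rfl fun l (_ : l ∈ univ) => hn l]
            exact Finset.sum_fiberwise univ σ α
          rw [this]; ring

end Directions

theorem reduced_instance_cost_error
    {d nA nB N : ℕ}
    (a : Fin nA → EuclideanSpace ℝ (Fin d)) (α : Fin nA → ℝ)
    (b : Fin nB → EuclideanSpace ℝ (Fin d)) (β : Fin nB → ℝ)
    (W : ℝ) (hW : 0 < W)
    (hα : ∀ i, 0 ≤ α i) (hβ : ∀ j, 0 ≤ β j)
    (hαW : ∑ i, α i = W) (hβW : ∑ j, β j = W)
    (p : Fin N → EuclideanSpace ℝ (Fin d))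
    (σ : Fin nA → Fin N) (τ : Fin nB → Fin N)
    (r : ℝ) (hr : 0 ≤ r)
    (hσ : ∀ i, ‖a i - p (σ i)‖ ≤ r) (hτ : ∀ j, ‖b j - p (τ j)‖ ≤ r)
    (n m : Fin N → ℝ)
    (hn : ∀ l, n l = ∑ i ∈ Finset.univ.filter (fun i => σ i = l), α i)
    (hm : ∀ l, m l = ∑ j ∈ Finset.univ.filter (fun j => τ j = l), β j) :
    |Cost p (fun l => max (n l - m l) 0) p (fun l => max (m l - n l) 0)
        - Cost a α b β| ≤ 2 * r * W := by
  classical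
  have hnW : ∑ l, n l = W := by
    rw [Finset.sum_congr rfl fun l (_ : l ∈ univ) => hn l,
        Finset.sum_fiberwise univ σ α, hαW]
  have hmW : ∑ l, m l = W := by
    rw [Finset.sum_congr rfl fun l (_ : l ∈ univ) => hm l,
        Finset.sum_fiberwise univ τ β, hβW]
  have hn0 : ∀ l, 0 ≤ n l := fun l => (hn l) ▸ Finset.sum_nonneg fun i _ => hα i
  have hm0 : ∀ l, 0 ≤ m l := fun l => (hm l) ▸ Finset.sum_nonneg fun j _ => hβ j
  set n' : Fin N → ℝ := fun l => max (n l - m l) 0 with hn'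
  set m' : Fin N → ℝ := fun l => max (m l - n l) 0 with hm'
  set S := {c : ℝ | ∃ f, IsFeasibleFlow α β f ∧ c = ∑ i, ∑ j, f i j * ‖a i - b j‖}
    with hS
  set T := {c : ℝ | ∃ g, IsFeasibleFlow n' m' g ∧ c = ∑ l, ∑ l', g l l' * ‖p l - p l'‖}
    with hT
  have hCostS : Cost a α b β = sInf S := rfl
  have hCostT : Cost p n' p m' = sInf T := rfl
  have hSb : BddBelow S := by
    refine ⟨0, fun c hc => ?_⟩
    obtain ⟨f, hf, rfl⟩ := hc
    exact Finset.sum_nonneg fun i _ => Finset.sum_nonneg fun j _ =>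
      mul_nonneg (hf.1 i j) (norm_nonneg _)
  have hTb : BddBelow T := by
    refine ⟨0, fun c hc => ?_⟩
    obtain ⟨g, hg, rfl⟩ := hc
    exact Finset.sum_nonneg fun l _ => Finset.sum_nonneg fun l' _ =>
      mul_nonneg (hg.1 l l') (norm_nonneg _)
  have hSne : S.Nonempty := by
    obtain ⟨f, hf⟩ := flow_exists α β hα hβ (by rw [hαW, hβW])
    exact ⟨_, f, hf, rfl⟩
  have hTne : T.Nonempty := by
    have e : ∀ l, n' l = m' l + (n l - m l) := by
      intro l
      simp only [hn', hm']
      rcases le_total (n l) (m l) with h | h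
      · rw [max_eq_right (by linarith : n l - m l ≤ 0),
            max_eq_left (by linarith : (0:ℝ) ≤ m l - n l)]; ring
      · rw [max_eq_left (by linarith : (0:ℝ) ≤ n l - m l),
            max_eq_right (by linarith : m l - n l ≤ 0)]; ring
    have hsum : ∑ l, n' l = ∑ l, m' l := by
      rw [Finset.sum_congr rfl fun l (_ : l ∈ univ) => e l, Finset.sum_add_distrib,
          Finset.sum_sub_distrib, hnW, hmW]
      ring
    obtain ⟨g, hg⟩ := flow_exists n' m' (fun l => le_max_right _ _)
      (fun l => le_max_right _ _) hsum
    exact ⟨_, g, hg, rfl⟩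
  have key1 : ∀ c ∈ S, sInf T ≤ c + 2 * r * W := by
    rintro c ⟨f, hf, rfl⟩
    obtain ⟨g, hgf, hgc⟩ := dirA a α b β p σ τ r n m hα hβ hσ hτ hn hm f hf
    obtain ⟨g', hg'f, hg'c⟩ := cancel_common (fun l l' => ‖p l - p l'‖)
      (fun _ _ => norm_nonneg _) (fun l l' => norm_sub_rev _ _)
      (fun x y z => norm_sub_le_norm_sub_add_norm_sub _ _ _) N n m g
      ((Finset.card_filter_le _ _).trans (by simp)) hgf
    have hmarg1 : (fun l => n l - min (n l) (m l)) = n' := by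
      funext l
      simp only [hn']
      rcases le_total (n l) (m l) with h | h
      · rw [min_eq_left h, max_eq_right (by linarith : n l - m l ≤ 0)]; ring
      · rw [min_eq_right h, max_eq_left (by linarith : (0:ℝ) ≤ n l - m l)]
    have hmarg2 : (fun l => m l - min (n l) (m l)) = m' := by
      funext l
      simp only [hm']
      rcases le_total (n l) (m l) with h | h
      · rw [min_eq_left h, max_eq_left (by linarith : (0:ℝ) ≤ m l - n l)]
      · rw [min_eq_right h, max_eq_right (by linarith : m l - n l ≤ 0)]; ring
    rw [hmarg1, hmarg2] at hg'f
    have hmem : (∑ l, ∑ l', g' l l' * ‖p l - p l'‖) ∈ T := ⟨g', hg'f, rfl⟩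
    have h1 := csInf_le hTb hmem
    rw [hαW] at hgc
    linarith
  have ineq1 : sInf T ≤ sInf S + 2 * r * W := by
    have hlb : ∀ c ∈ S, sInf T - 2 * r * W ≤ c := fun c hc => by linarith [key1 c hc]
    linarith [le_csInf hSne hlb]
  have key2 : ∀ c ∈ T, sInf S ≤ c + 2 * r * W := by
    rintro c ⟨g', hg', rfl⟩
    set g : Fin N → Fin N → ℝ :=
      fun l l' => g' l l' + (if l' = l then min (n l) (m l) else 0) with hgdef
    have hgf : IsFeasibleFlow n m g := by
      refine ⟨?_, ?_, ?_⟩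
      · intro l l'
        refine add_nonneg (hg'.1 l l') ?_
        by_cases h : l' = l
        · rw [if_pos h]; exact le_min (hn0 l) (hm0 l)
        · rw [if_neg h]
      · intro l'
        simp only [hgdef]
        rw [Finset.sum_add_distrib, hg'.2.1 l']
        rw [Finset.sum_ite_eq univ l' (fun l => min (n l) (m l)), if_pos (mem_univ l')]
        simp only [hm']
        rcases le_total (n l') (m l') with h | h
        · rw [min_eq_left h, max_eq_left (by linarith : (0:ℝ) ≤ m l' - n l')]; ring
        · rw [min_eq_right h, max_eq_right (by linarith : m l' - n l' ≤ 0)]; ring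
      · intro l
        simp only [hgdef]
        rw [Finset.sum_add_distrib, hg'.2.2 l]
        rw [Finset.sum_ite_eq' univ l (fun _ => min (n l) (m l)), if_pos (mem_univ l)]
        simp only [hn']
        rcases le_total (n l) (m l) with h | h
        · rw [min_eq_left h, max_eq_right (by linarith : n l - m l ≤ 0)]; ring
        · rw [min_eq_right h, max_eq_left (by linarith : (0:ℝ) ≤ n l - m l)]; ring
    have hgcost : ∑ l, ∑ l', g l l' * ‖p l - p l'‖
        = ∑ l, ∑ l', g' l l' * ‖p l - p l'‖ := by
      refine Finset.sum_congr rfl fun l _ => Finset.sum_congr rfl fun l' _ => ?_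
      simp only [hgdef]
      by_cases h : l' = l
      · rw [if_pos h, h, sub_self, norm_zero, mul_zero, mul_zero]
      · rw [if_neg h, add_zero]
    obtain ⟨f, hff, hfc⟩ := dirB a α b β p σ τ r n m hα hβ hσ hτ hn hm g hgf
    have hmem : (∑ i, ∑ j, f i j * ‖a i - b j‖) ∈ S := ⟨f, hff, rfl⟩
    have h1 := csInf_le hSb hmem
    rw [hαW, hgcost] at hfc
    linarith
  have ineq2 : sInf S ≤ sInf T + 2 * r * W := by
    have hlb : ∀ c ∈ T, sInf S - 2 * r * W ≤ c := fun c hc => by linarith [key2 c hc]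
    linarith [le_csInf hTne hlb]
  rw [hCostT, hCostS, abs_sub_le_iff]
  constructor <;> linarith
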